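/- The norm $\|\cdot\|_1$ on $L^1[0,1]$ is directionally Hadamard differentiable at every $f \in L^1[0,1]$: for every $h \in L^1[0,1]$, every sequence $t_n \to 0$ with $t_n > 0$, and every sequence $h_n \to h$ in $L^1[0,1]$, one has $\lim_{n\to\infty} \frac{\|f + t_n h_n\|_1 - \|f\|_1}{t_n} = \int_{\{x : f(x) \neq 0\}} \operatorname{sgn}(f(x))\,h(x)\,dx + \int_{\{x : f(x) = 0\}} |h(x)|\,dx$. -/

import Mathlib

open MeasureTheory Filter

lemma measurable_realSign : Measurable Real.sign := by
  unfold Real.sign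
  exact Measurable.ite (measurableSet_lt measurable_id measurable_const) measurable_const
    (Measurable.ite (measurableSet_lt measurable_const measurable_id) measurable_const
      measurable_const)

lemma aux_quot_eq {a b t : ℝ} (ht : 0 < t) (hab : |t * b| < |a|) :
    (|a + t * b| - |a|) / t = Real.sign a * b := by
  rcases lt_trichotomy a 0 with ha | ha | ha
  · have h1 : a + t * b < 0 := by
      have := le_abs_self (t * b)
      have h2 : |a| = -a := abs_of_neg ha
      linarith
    rw [abs_of_neg ha, abs_of_neg h1, Real.sign_of_neg ha]
    field_simp
    ring
  · simp [ha] at hab; exact absurd hab (mul_nonneg (abs_nonneg _) (abs_nonneg _)).not_gt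
  · have h1 : 0 < a + t * b := by
      have := neg_abs_le (t * b)
      have h2 : |a| = a := abs_of_pos ha
      linarith
    rw [abs_of_pos ha, abs_of_pos h1, Real.sign_of_pos ha]
    field_simp
    ring

variable {α : Type*} [MeasurableSpace α] {μ : Measure α}

lemma coeFn_add_smul (f h : Lp ℝ 1 μ) (c : ℝ) :
    (⇑(f + c • h) : α → ℝ) =ᵐ[μ] fun a => f a + c * h a := by
  filter_upwards [Lp.coeFn_add f (c • h), Lp.coeFn_smul c h] with a h1 h2
  simp only [h1, Pi.add_apply, h2, Pi.smul_apply, smul_eq_mul]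

lemma norm_add_smul (f h : Lp ℝ 1 μ) (c : ℝ) :
    ‖f + c • h‖ = ∫ a, |f a + c * h a| ∂μ := by
  rw [L1.norm_eq_integral_norm]
  refine integral_congr_ae ?_
  filter_upwards [coeFn_add_smul f h c] with a ha
  rw [ha, Real.norm_eq_abs]

lemma integrable_add_smul (f h : Lp ℝ 1 μ) (c : ℝ) :
    Integrable (fun a => |f a + c * h a|) μ :=
  ((L1.integrable_coeFn (f + c • h)).congr (coeFn_add_smul f h c)).abs

lemma gateaux (f h : Lp ℝ 1 μ) (t : ℕ → ℝ) (ht0 : ∀ n, 0 < t n)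
    (htlim : Tendsto t atTop (nhds 0)) :
    Tendsto (fun n => (‖f + t n • h‖ - ‖f‖) / t n) atTop
      (nhds (∫ x, (if f x = 0 then |h x| else Real.sign (f x) * h x) ∂μ)) := by
  have mf : Measurable (⇑f) := (Lp.stronglyMeasurable f).measurable
  have mh : Measurable (⇑h) := (Lp.stronglyMeasurable h).measurable
  set F : ℕ → α → ℝ := fun n x => (|f x + t n * h x| - |f x|) / t n with hF
  have hq : ∀ n, (‖f + t n • h‖ - ‖f‖) / t n = ∫ x, F n x ∂μ := by
    intro n
    rw [norm_add_smul f h (t n), L1.norm_eq_integral_norm,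
      show (∫ a, ‖f a‖ ∂μ) = ∫ a, |f a| ∂μ from integral_congr_ae
        (Eventually.of_forall fun a => Real.norm_eq_abs _),
      ← integral_sub (integrable_add_smul f h (t n)) (L1.integrable_coeFn f).abs,
      ← integral_div]
  simp only [hq]
  refine tendsto_integral_of_dominated_convergence (fun x => |h x|) ?_ ?_ ?_ ?_
  · intro n
    exact (((mf.add (measurable_const.mul mh)).abs.sub mf.abs).div_const _).aestronglyMeasurable
  · exact (L1.integrable_coeFn h).abs
  · intro n
    refine Eventually.of_forall fun x => ?_
    rw [Real.norm_eq_abs, hF]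
    rw [abs_div, abs_of_pos (ht0 n), div_le_iff₀ (ht0 n)]
    calc abs (|f x + t n * h x| - |f x|) ≤ |f x + t n * h x - f x| :=
          abs_abs_sub_abs_le_abs_sub _ _
      _ = t n * |h x| := by rw [add_sub_cancel_left, abs_mul, abs_of_pos (ht0 n)]
      _ = |h x| * t n := mul_comm _ _
  · refine Eventually.of_forall fun x => ?_
    by_cases hx : f x = 0
    · simp only [hx, if_pos]
      refine Tendsto.congr (fun n => ?_) tendsto_const_nhds
      simp only [hF, hx, zero_add, abs_mul, abs_of_pos (ht0 n), sub_zero, abs_zero]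
      rw [mul_comm, mul_div_assoc, div_self (ht0 n).ne', mul_one]
    · simp only [hx, if_neg, if_false]
      have h0 : Tendsto (fun n => |t n * h x|) atTop (nhds 0) := by
        have := (htlim.mul_const (h x)).abs
        simpa using this
      have hev : ∀ᶠ n in atTop, |t n * h x| < |f x| :=
        h0.eventually_lt_const (abs_pos.mpr hx)
      refine Tendsto.congr' ?_ tendsto_const_nhds
      filter_upwards [hev] with n hn
      exact (aux_quot_eq (ht0 n) hn).symm

lemma abs_sign_le_one (a : ℝ) : |Real.sign a| ≤ 1 := by
  unfold Real.sign; split_ifs <;> norm_num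

lemma integral_split (f h : Lp ℝ 1 μ) :
    ∫ x, (if f x = 0 then |h x| else Real.sign (f x) * h x) ∂μ
      = (∫ x in {x | f x ≠ 0}, Real.sign (f x) * h x ∂μ)
        + ∫ x in {x | f x = 0}, |h x| ∂μ := by
  have mf : Measurable (⇑f) := (Lp.stronglyMeasurable f).measurable
  have mh : Measurable (⇑h) := (Lp.stronglyMeasurable h).measurable
  set g : α → ℝ := fun x => if f x = 0 then |h x| else Real.sign (f x) * h x with hg
  have hsm : MeasurableSet {x | f x = 0} := mf (measurableSet_singleton 0)
  have hgm : Measurable g :=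
    Measurable.ite hsm mh.abs ((measurable_realSign.comp mf).mul mh)
  have hgint : Integrable g μ := by
    refine ((L1.integrable_coeFn h).abs).mono hgm.aestronglyMeasurable ?_
    refine Filter.Eventually.of_forall fun x => ?_
    simp only [Real.norm_eq_abs, abs_abs, hg]
    by_cases hx : f x = 0
    · simp [hx]
    · rw [if_neg hx, abs_mul]
      calc |Real.sign (f x)| * |h x| ≤ 1 * |h x| :=
            mul_le_mul_of_nonneg_right (abs_sign_le_one _) (abs_nonneg _)
        _ = |h x| := one_mul _
  have hc : {x | f x ≠ 0} = {x | f x = 0}ᶜ := rfl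
  rw [← integral_add_compl hsm hgint, hc, add_comm]
  congr 1
  · exact setIntegral_congr_fun hsm.compl fun x hx => if_neg hx
  · exact setIntegral_congr_fun hsm fun x hx => if_pos hx

/-- Directional Hadamard differentiability of the `L¹[0,1]` norm at every `f`:
for every direction `h`, every positive null sequence `tₙ` and every `hₙ → h` in `L¹`,
`(‖f + tₙ hₙ‖₁ - ‖f‖₁)/tₙ → ∫_{f≠0} sgn(f) h + ∫_{f=0} |h|`. -/
theorem L1_norm_hadamard_diff
    (f h : Lp ℝ 1 (volume.restrict (Set.Icc (0 : ℝ) 1)))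
    (t : ℕ → ℝ) (ht0 : ∀ n, 0 < t n) (htlim : Filter.Tendsto t Filter.atTop (nhds 0))
    (hs : ℕ → Lp ℝ 1 (volume.restrict (Set.Icc (0 : ℝ) 1)))
    (hslim : Filter.Tendsto hs Filter.atTop (nhds h)) :
    Filter.Tendsto (fun n => (‖f + t n • hs n‖ - ‖f‖) / t n) Filter.atTop
      (nhds ((∫ x in {x : ℝ | f x ≠ 0}, Real.sign (f x) * h x
                ∂(volume.restrict (Set.Icc (0 : ℝ) 1)))
             + ∫ x in {x : ℝ | f x = 0}, |h x|
                ∂(volume.restrict (Set.Icc (0 : ℝ) 1)))) := by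
  have hg := gateaux f h t ht0 htlim
  have herr : Tendsto (fun n => (‖f + t n • hs n‖ - ‖f‖) / t n
      - (‖f + t n • h‖ - ‖f‖) / t n) atTop (nhds 0) := by
    refine squeeze_zero_norm (fun n => ?_)
      (tendsto_iff_norm_sub_tendsto_zero.mp hslim)
    rw [div_sub_div_same,
      show (‖f + t n • hs n‖ - ‖f‖) - (‖f + t n • h‖ - ‖f‖)
        = ‖f + t n • hs n‖ - ‖f + t n • h‖ by ring,
      Real.norm_eq_abs, abs_div, abs_of_pos (ht0 n), div_le_iff₀ (ht0 n)]
    calc |‖f + t n • hs n‖ - ‖f + t n • h‖| ≤ ‖(f + t n • hs n) - (f + t n • h)‖ :=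
          abs_norm_sub_norm_le _ _
      _ = ‖t n • (hs n - h)‖ := by rw [smul_sub]; congr 1; abel
      _ = t n * ‖hs n - h‖ := by rw [norm_smul, Real.norm_eq_abs, abs_of_pos (ht0 n)]
      _ = ‖hs n - h‖ * t n := mul_comm _ _
  rw [← integral_split f h]
  have H := herr.add hg
  rw [zero_add] at H
  exact H.congr fun n => by ring
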